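/- Fix integers m ≥ 1, n ≥ 1 and t = (t_1,…,t_{2m}) ∈ ℝ^{2m−1}×(0,∞). Then Z_n(λ;t) → Z_n^{GUE} as λ → +∞, where Z_n^{GUE} = (2π)^{n/2}(4n)^{−n²/2} ∏_{j=1}^n j!. -/

import Mathlib

open MeasureTheory Filter Set

noncomputable section

/-- The potential `V(x;λ,t) = 2x² + Σ_{k=1}^{2m} t_k (x−λ)^{−k}`. -/
def Vpot (m : ℕ) (lam : ℝ) (t : ℕ → ℝ) (x : ℝ) : ℝ :=
  2 * x ^ 2 + ∑ k ∈ Finset.Icc 1 (2 * m), t k * (x - lam) ^ (-(k : ℤ))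

/-- The weight `w_n(x;λ,t) = e^{−n V(x;λ,t)}`, extended by `0` at `x = λ`. -/
def wfun (m n : ℕ) (lam : ℝ) (t : ℕ → ℝ) (x : ℝ) : ℝ :=
  if x = lam then 0 else Real.exp (-(n : ℝ) * Vpot m lam t x)

/-- The partition function `Z_n(λ;t)`. -/
def Zn (m n : ℕ) (lam : ℝ) (t : ℕ → ℝ) : ℝ :=
  ∫ x : Fin n → ℝ,
    (∏ i : Fin n, ∏ j : Fin n, if i < j then (x j - x i) ^ 2 else 1) *
      ∏ j : Fin n, wfun m n lam t (x j)

/-- The GUE partition function `Z_n^{GUE} = (2π)^{n/2} (4n)^{−n²/2} ∏_{j=1}^n j!`. -/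
def ZGUE (n : ℕ) : ℝ :=
  (2 * Real.pi) ^ ((n : ℝ) / 2) * (4 * (n : ℝ)) ^ (-((n : ℝ) ^ 2) / 2) *
    ∏ j ∈ Finset.Icc 1 n, (Nat.factorial j : ℝ)

-- ## Auxiliary lemmas

open Polynomial Real

lemma integrable_pow_gauss {b : ℝ} (hb : 0 < b) (k : ℕ) :
    Integrable fun x : ℝ => x ^ k * Real.exp (-b * x ^ 2) := by
  have h2 : Integrable fun x : ℝ => x ^ (2 * k) * Real.exp (-b * x ^ 2) := by
    have h := integrable_rpow_mul_exp_neg_mul_sq hb (s := ((2 * k : ℕ) : ℝ))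
      (by exact_mod_cast neg_one_lt_zero.trans_le (Nat.cast_nonneg _))
    simpa only [Real.rpow_natCast] using h
  refine ((integrable_exp_neg_mul_sq hb).add h2).mono' ?_ ?_
  · exact ((measurable_id.pow_const k).mul
      ((measurable_id.pow_const 2).const_mul (-b)).exp).aestronglyMeasurable
  · filter_upwards with x
    rw [norm_mul, Real.norm_eq_abs, Real.norm_eq_abs, abs_pow,
      abs_of_pos (Real.exp_pos _)]
    have h1 : |x| ^ k ≤ 1 + x ^ (2 * k) := by
      rcases le_or_gt |x| 1 with h | h
      · have := pow_le_one₀ (abs_nonneg x) h (n := k)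
        nlinarith [pow_nonneg (abs_nonneg x) (2 * k), even_two_mul k,
          (even_two_mul k).pow_abs (a := x)]
      · have h2 : |x| ^ k ≤ |x| ^ (2 * k) :=
          pow_le_pow_right₀ h.le (by omega)
        have h3 : |x| ^ (2 * k) = x ^ (2 * k) := (even_two_mul k).pow_abs x
        nlinarith
    simp only [Pi.add_apply]
    nlinarith [Real.exp_pos (-b * x ^ 2),
      mul_le_mul_of_nonneg_right h1 (Real.exp_pos (-b * x ^ 2)).le]

lemma integrable_poly_gauss (p : ℝ[X]) {b : ℝ} (hb : 0 < b) :
    Integrable fun x : ℝ => p.eval x * Real.exp (-b * x ^ 2) := by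
  have : (fun x : ℝ => p.eval x * Real.exp (-b * x ^ 2)) =
      fun x => ∑ k ∈ Finset.range (p.natDegree + 1),
        p.coeff k * (x ^ k * Real.exp (-b * x ^ 2)) := by
    funext x
    rw [eval_eq_sum_range, Finset.sum_mul]
    congr 1; ext k; ring
  rw [this]
  exact integrable_finset_sum _ fun k _ => (integrable_pow_gauss hb k).const_mul _

/-- The standard Gaussian weight. -/
def gw (x : ℝ) : ℝ := Real.exp (-(1/2 : ℝ) * x ^ 2)

/-- Monic (probabilists') Hermite polynomials over `ℝ`. -/
def Herm (n : ℕ) : ℝ[X] := (hermite n).map (Int.castRingHom ℝ)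

lemma Herm_zero : Herm 0 = 1 := by simp [Herm, hermite_zero]

lemma Herm_succ (n : ℕ) : Herm (n + 1) = X * Herm n - derivative (Herm n) := by
  simp only [Herm, hermite_succ, Polynomial.map_sub, Polynomial.map_mul, map_X,
    derivative_map]

lemma Herm_monic (n : ℕ) : (Herm n).Monic := (hermite_monic n).map _

lemma Herm_natDegree (n : ℕ) : (Herm n).natDegree = n := by
  rw [Herm, (hermite_monic n).natDegree_map, natDegree_hermite]

lemma Herm_coeff_self (n : ℕ) : (Herm n).coeff n = 1 := by
  simp [Herm, coeff_map, coeff_hermite_self]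

lemma integrable_poly_gauss' (p : ℝ[X]) : Integrable fun x : ℝ => p.eval x * gw x :=
  integrable_poly_gauss p one_half_pos

lemma hasDerivAt_gw (x : ℝ) : HasDerivAt gw (-x * gw x) x := by
  have h : HasDerivAt (fun y : ℝ => -(1/2 : ℝ) * y ^ 2) (-x) x := by
    have := (hasDerivAt_pow 2 x).const_mul (-(1/2 : ℝ))
    simpa using this
  have h2 := h.exp
  show HasDerivAt (fun y : ℝ => Real.exp (-(1/2 : ℝ) * y ^ 2)) (-x * gw x) x
  have e : -x * gw x = Real.exp (-(1/2 : ℝ) * x ^ 2) * (-x) := by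
    rw [mul_comm]; rfl
  rw [e]
  exact h2

lemma ibp_step (p q : ℝ[X]) :
    ∫ x : ℝ, p.eval x * (((X * q - derivative q).eval x) * gw x) =
      ∫ x : ℝ, (derivative p).eval x * (q.eval x * gw x) := by
  have hu : ∀ x : ℝ, HasDerivAt (fun y => p.eval y) ((derivative p).eval x) x :=
    fun x => p.hasDerivAt x
  have hv : ∀ x : ℝ, HasDerivAt (fun y => q.eval y * gw y)
      (((derivative q - X * q).eval x) * gw x) x := by
    intro x
    have h := (q.hasDerivAt x).mul (hasDerivAt_gw x)
    have : (derivative q).eval x * gw x + q.eval x * (-x * gw x) =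
        ((derivative q - X * q).eval x) * gw x := by
      simp [eval_sub, eval_mul]; ring
    rw [← this]
    exact h
  have hint : ∀ r : ℝ[X], Integrable fun x : ℝ => p.eval x * (r.eval x * gw x) := by
    intro r
    have := integrable_poly_gauss' (p * r)
    simpa [eval_mul, mul_assoc] using this
  have h1 : Integrable ((fun x : ℝ => p.eval x) *
      fun x => ((derivative q - X * q).eval x) * gw x) := by
    have h := hint (derivative q - X * q)
    simp only [eval_sub, eval_mul, eval_X] at h
    simpa [Pi.mul_def] using h
  have h2 : Integrable ((fun x : ℝ => (derivative p).eval x) *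
      fun x => q.eval x * gw x) := by
    have := integrable_poly_gauss' (derivative p * q)
    simpa [Pi.mul_def, eval_mul, mul_assoc] using this
  have h3 : Integrable ((fun x : ℝ => p.eval x) * fun x => q.eval x * gw x) := by
    simpa [Pi.mul_def] using hint q
  have key := integral_mul_deriv_eq_deriv_mul_of_integrable (fun x _ => hu x) (fun x _ => hv x) h1 h2 h3
  have e1 : (fun x : ℝ => p.eval x * (((X * q - derivative q).eval x) * gw x)) =
      fun x : ℝ => -(p.eval x * (((derivative q - X * q).eval x) * gw x)) := by
    funext x; simp only [eval_sub, eval_mul, eval_X]; ring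
  rw [e1, integral_neg, key, neg_neg]

lemma hermite_reduce (n : ℕ) (p : ℝ[X]) :
    ∫ x : ℝ, p.eval x * ((Herm n).eval x * gw x) =
      ∫ x : ℝ, ((derivative^[n] p).eval x) * gw x := by
  induction n generalizing p with
  | zero => simp [Herm_zero]
  | succ n ih =>
    have h := ibp_step p (Herm n)
    rw [← Herm_succ] at h
    rw [h, ih (derivative p), Function.iterate_succ_apply]

lemma hermite_gauss_ortho (a b : ℕ) (hab : a < b) :
    ∫ x : ℝ, (Herm a).eval x * ((Herm b).eval x * gw x) = 0 := by
  rw [hermite_reduce b (Herm a)]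
  have : derivative^[b] (Herm a) = 0 :=
    iterate_derivative_eq_zero (by simpa [Herm_natDegree] using hab)
  simp [this]

lemma hermite_gauss_self (a : ℕ) :
    ∫ x : ℝ, (Herm a).eval x * ((Herm a).eval x * gw x) =
      (a.factorial : ℝ) * Real.sqrt (2 * Real.pi) := by
  rw [hermite_reduce a (Herm a)]
  have hC : derivative^[a] (Herm a) = C (a.factorial : ℝ) := by
    have hdeg : (derivative^[a] (Herm a)).natDegree ≤ 0 := by
      have := natDegree_iterate_derivative (Herm a) a
      simpa [Herm_natDegree] using this
    have h0 := Polynomial.eq_C_of_natDegree_le_zero hdeg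
    rw [h0]
    congr 1
    have hc := coeff_iterate_derivative (Herm a) (k := a) 0
    simp only [zero_add] at hc
    rw [hc, Herm_coeff_self, Nat.descFactorial_self]
    simp
  rw [hC]
  simp only [eval_C]
  rw [integral_const_mul]
  congr 1
  have := integral_gaussian (1/2 : ℝ)
  have e : (fun x : ℝ => gw x) = fun x : ℝ => Real.exp (-(1/2 : ℝ) * x ^ 2) := rfl
  rw [show (∫ x : ℝ, gw x) = ∫ x : ℝ, Real.exp (-(1/2 : ℝ) * x ^ 2) from rfl, this]
  rw [show Real.pi / (1/2 : ℝ) = 2 * Real.pi by ring]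

/-- The pairing integral. -/
def Kpair (a b : ℕ) : ℝ := ∫ x : ℝ, (Herm a).eval x * ((Herm b).eval x * gw x)

lemma Kpair_eq (a b : ℕ) :
    Kpair a b = if a = b then (a.factorial : ℝ) * Real.sqrt (2 * Real.pi) else 0 := by
  rcases lt_trichotomy a b with h | rfl | h
  · rw [if_neg h.ne, Kpair, hermite_gauss_ortho a b h]
  · rw [if_pos rfl, Kpair, hermite_gauss_self]
  · rw [if_neg h.ne', Kpair]
    have e : (fun x : ℝ => (Herm a).eval x * ((Herm b).eval x * gw x)) =
        fun x : ℝ => (Herm b).eval x * ((Herm a).eval x * gw x) := by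
      funext x; ring
    rw [e, hermite_gauss_ortho b a h]

lemma Kpair_integrable (a b : ℕ) :
    Integrable fun x : ℝ => (Herm a).eval x * ((Herm b).eval x * gw x) := by
  have h := integrable_poly_gauss' (Herm a * Herm b)
  simp only [eval_mul] at h
  simpa [mul_assoc] using h

lemma vand_sq {n : ℕ} (x : Fin n → ℝ) :
    (∏ i : Fin n, ∏ j : Fin n, if i < j then (x j - x i) ^ 2 else 1) =
      (Matrix.vandermonde x).det ^ 2 := by
  rw [Matrix.det_vandermonde, ← Finset.prod_pow]
  refine Finset.prod_congr rfl fun i _ => ?_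
  rw [← Finset.prod_pow]
  rw [show (Finset.Ioi i) = Finset.filter (fun j => i < j) Finset.univ by ext j; simp]
  rw [Finset.prod_filter]

lemma perm_sign_sq {n : ℕ} (σ : Equiv.Perm (Fin n)) :
    (((Equiv.Perm.sign σ : ℤ) : ℝ)) * ((Equiv.Perm.sign σ : ℤ) : ℝ) = 1 := by
  rcases Int.units_eq_one_or (Equiv.Perm.sign σ) with h | h <;> rw [h] <;> norm_num

/-- Andréief / orthogonal-polynomial evaluation of the Gaussian Vandermonde integral. -/
lemma gauss_andreief (n : ℕ) :
    ∫ x : Fin n → ℝ,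
        (∏ i : Fin n, ∏ j : Fin n, if i < j then (x j - x i) ^ 2 else 1) * ∏ j, gw (x j) =
      Real.sqrt (2 * Real.pi) ^ n * (n.factorial : ℝ) *
        ∏ i : Fin n, ((i : ℕ).factorial : ℝ) := by
  classical
  set c : Equiv.Perm (Fin n) → ℝ := fun σ => ((Equiv.Perm.sign σ : ℤ) : ℝ) with hc
  have hdet : ∀ x : Fin n → ℝ, (Matrix.vandermonde x).det =
      ∑ σ : Equiv.Perm (Fin n), c σ * ∏ j : Fin n, (Herm (σ j)).eval (x j) := by
    intro x
    rw [Matrix.det_eval_matrixOfPolynomials_eq_det_vandermonde x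
        (fun i : Fin n => Herm (i : ℕ)) (fun i => Herm_natDegree i) (fun i => Herm_monic i),
      ← Matrix.det_transpose, Matrix.det_apply']
    exact Finset.sum_congr rfl fun σ _ => rfl
  have hint : ∀ x : Fin n → ℝ,
      (∏ i : Fin n, ∏ j : Fin n, if i < j then (x j - x i) ^ 2 else 1) * ∏ j, gw (x j) =
      ∑ σ : Equiv.Perm (Fin n), ∑ τ : Equiv.Perm (Fin n),
        (c σ * c τ) *
          ∏ j : Fin n, ((Herm (σ j)).eval (x j) * ((Herm (τ j)).eval (x j) * gw (x j))) := by
    intro x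
    rw [vand_sq, sq, hdet, Finset.sum_mul_sum, Finset.sum_mul]
    refine Finset.sum_congr rfl fun σ _ => ?_
    rw [Finset.sum_mul]
    refine Finset.sum_congr rfl fun τ _ => ?_
    have : ∏ j : Fin n, ((Herm (σ j)).eval (x j) * ((Herm (τ j)).eval (x j) * gw (x j))) =
        (∏ j : Fin n, (Herm (σ j)).eval (x j)) *
          ((∏ j : Fin n, (Herm (τ j)).eval (x j)) * ∏ j : Fin n, gw (x j)) := by
      rw [← Finset.prod_mul_distrib, ← Finset.prod_mul_distrib]
    rw [this]; ring
  have hintg : ∀ σ τ : Equiv.Perm (Fin n),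
      Integrable (fun x : Fin n → ℝ =>
        (c σ * c τ) *
          ∏ j : Fin n, ((Herm (σ j)).eval (x j) * ((Herm (τ j)).eval (x j) * gw (x j)))) := by
    intro σ τ
    exact (Integrable.fintype_prod (f := fun j (y : ℝ) =>
      (Herm (σ j)).eval y * ((Herm (τ j)).eval y * gw y))
      (fun j => Kpair_integrable (σ j) (τ j))).const_mul _
  have e0 : (fun x : Fin n → ℝ =>
      (∏ i : Fin n, ∏ j : Fin n, if i < j then (x j - x i) ^ 2 else 1) * ∏ j, gw (x j)) =
      fun x => ∑ σ : Equiv.Perm (Fin n), ∑ τ : Equiv.Perm (Fin n),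
        (c σ * c τ) *
          ∏ j : Fin n, ((Herm (σ j)).eval (x j) * ((Herm (τ j)).eval (x j) * gw (x j))) :=
    funext hint
  rw [e0, integral_finset_sum _ (fun σ _ => integrable_finset_sum _ (fun τ _ => hintg σ τ))]
  have e1 : ∀ σ : Equiv.Perm (Fin n),
      (∫ x : Fin n → ℝ, ∑ τ : Equiv.Perm (Fin n), (c σ * c τ) *
          ∏ j : Fin n, ((Herm (σ j)).eval (x j) * ((Herm (τ j)).eval (x j) * gw (x j)))) =
      ∑ τ : Equiv.Perm (Fin n), (c σ * c τ) * ∏ j : Fin n, Kpair (σ j) (τ j) := by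
    intro σ
    rw [integral_finset_sum _ (fun τ _ => hintg σ τ)]
    refine Finset.sum_congr rfl fun τ _ => ?_
    rw [integral_const_mul]
    congr 1
    exact integral_fintype_prod_eq_prod (ι := Fin n)
      (fun j (y : ℝ) => (Herm (σ j)).eval y * ((Herm (τ j)).eval y * gw y))
  rw [Finset.sum_congr rfl fun σ _ => e1 σ]
  have e2 : ∀ σ τ : Equiv.Perm (Fin n),
      (∏ j : Fin n, Kpair (σ j) (τ j)) =
        if σ = τ then Real.sqrt (2 * Real.pi) ^ n * ∏ j : Fin n, (((σ j : ℕ)).factorial : ℝ)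
        else 0 := by
    intro σ τ
    by_cases h : σ = τ
    · subst h
      rw [if_pos rfl]
      have : ∀ j : Fin n, Kpair (σ j) (σ j) =
          (((σ j : ℕ)).factorial : ℝ) * Real.sqrt (2 * Real.pi) := by
        intro j; rw [Kpair_eq, if_pos rfl]
      rw [Finset.prod_congr rfl fun j _ => this j, Finset.prod_mul_distrib,
        Finset.prod_const, Finset.card_univ, Fintype.card_fin]
      ring
    · rw [if_neg h]
      have : ∃ j : Fin n, (σ j : ℕ) ≠ (τ j : ℕ) := by
        by_contra hco
        push_neg at hco
        exact h (Equiv.ext fun j => Fin.val_injective (hco j))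
      obtain ⟨j, hj⟩ := this
      exact Finset.prod_eq_zero (Finset.mem_univ j) (by rw [Kpair_eq, if_neg hj])
  have e3 : ∀ σ : Equiv.Perm (Fin n),
      (∑ τ : Equiv.Perm (Fin n), (c σ * c τ) * ∏ j : Fin n, Kpair (σ j) (τ j)) =
      Real.sqrt (2 * Real.pi) ^ n * ∏ i : Fin n, ((i : ℕ).factorial : ℝ) := by
    intro σ
    have : ∀ τ : Equiv.Perm (Fin n), (c σ * c τ) * ∏ j : Fin n, Kpair (σ j) (τ j) =
        if σ = τ then (c σ * c τ) *
          (Real.sqrt (2 * Real.pi) ^ n * ∏ j : Fin n, (((σ j : ℕ)).factorial : ℝ)) else 0 := by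
      intro τ
      rw [e2 σ τ]
      by_cases h : σ = τ
      · rw [if_pos h, if_pos h]
      · rw [if_neg h, if_neg h, mul_zero]
    rw [Finset.sum_congr rfl fun τ _ => this τ, Finset.sum_ite_eq, if_pos (Finset.mem_univ σ)]
    rw [show (∏ j : Fin n, (((σ j : ℕ)).factorial : ℝ)) = ∏ i : Fin n, ((i : ℕ).factorial : ℝ)
      from Equiv.prod_comp σ (fun i : Fin n => ((i : ℕ).factorial : ℝ))]
    rw [← mul_assoc, perm_sign_sq σ, one_mul]
  rw [Finset.sum_congr rfl fun σ _ => e3 σ, Finset.sum_const, Finset.card_univ,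
    Fintype.card_perm, Fintype.card_fin, nsmul_eq_mul]
  ring

lemma pairs_sum (n : ℕ) : n + 2 * ∑ i : Fin n, (n - 1 - (i : ℕ)) = n ^ 2 := by
  have h1 : ∑ i : Fin n, (n - 1 - (i : ℕ)) = ∑ i ∈ Finset.range n, (n - 1 - i) :=
    Fin.sum_univ_eq_sum_range _ n
  have h2 : ∑ i ∈ Finset.range n, (n - 1 - i) = ∑ i ∈ Finset.range n, i :=
    Finset.sum_range_reflect (fun i => i) n
  have h3 := Finset.sum_range_id_mul_two n
  rcases n with _ | k
  · simp
  · have h4 : (∑ i ∈ Finset.range (k+1), i) * 2 = (k+1) * k := by simpa using h3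
    rw [h1, h2]
    nlinarith [h4]

/-- Scaling the Gaussian Vandermonde integral. -/
lemma gauss_scaled (n : ℕ) (hn : 1 ≤ n) :
    ∫ x : Fin n → ℝ,
        (∏ i : Fin n, ∏ j : Fin n, if i < j then (x j - x i) ^ 2 else 1) *
          ∏ j, Real.exp (-(2 * (n : ℝ)) * (x j) ^ 2) =
      (Real.sqrt (4 * (n : ℝ)) ^ (n ^ 2))⁻¹ *
        (Real.sqrt (2 * Real.pi) ^ n * (n.factorial : ℝ) *
          ∏ i : Fin n, ((i : ℕ).factorial : ℝ)) := by
  have hn0 : (0 : ℝ) < (n : ℝ) := by exact_mod_cast hn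
  set R : ℝ := Real.sqrt (4 * (n : ℝ)) with hRdef
  have hR : 0 < R := Real.sqrt_pos.2 (by linarith)
  have hR2 : R ^ 2 = 4 * (n : ℝ) := Real.sq_sqrt (by linarith)
  set S : ℕ := ∑ i : Fin n, (n - 1 - (i : ℕ)) with hS
  set f : (Fin n → ℝ) → ℝ := fun x =>
    (∏ i : Fin n, ∏ j : Fin n, if i < j then (x j - x i) ^ 2 else 1) *
      ∏ j, Real.exp (-(2 * (n : ℝ)) * (x j) ^ 2) with hf
  have key := Measure.integral_comp_inv_smul (volume : Measure (Fin n → ℝ)) f R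
  rw [Module.finrank_fin_fun] at key
  have hpt : ∀ x : Fin n → ℝ, f (R⁻¹ • x) =
      (R ^ (2 * S))⁻¹ *
        ((∏ i : Fin n, ∏ j : Fin n, if i < j then (x j - x i) ^ 2 else 1) *
          ∏ j, gw (x j)) := by
    intro x
    have hsm : ∀ j : Fin n, (R⁻¹ • x) j = R⁻¹ * x j := fun j => rfl
    have hvand : (∏ i : Fin n, ∏ j : Fin n,
        if i < j then ((R⁻¹ • x) j - (R⁻¹ • x) i) ^ 2 else 1) =
        (∏ i : Fin n, ∏ j : Fin n, if i < j then (R⁻¹) ^ 2 else 1) *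
          (∏ i : Fin n, ∏ j : Fin n, if i < j then (x j - x i) ^ 2 else 1) := by
      rw [← Finset.prod_mul_distrib]
      refine Finset.prod_congr rfl fun i _ => ?_
      rw [← Finset.prod_mul_distrib]
      refine Finset.prod_congr rfl fun j _ => ?_
      by_cases h : i < j
      · simp only [if_pos h, hsm]
        ring
      · simp only [if_neg h, mul_one]
    have hfilter : ∀ i : Fin n,
        Finset.filter (fun j => i < j) Finset.univ = Finset.Ioi i := by
      intro i; ext j; simp
    have hconst : (∏ i : Fin n, ∏ j : Fin n, if i < j then (R⁻¹) ^ 2 else 1) =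
        (R ^ (2 * S))⁻¹ := by
      have h1 : ∀ i : Fin n, (∏ j : Fin n, if i < j then (R⁻¹) ^ 2 else 1) =
          ((R⁻¹) ^ 2) ^ (n - 1 - (i : ℕ)) := by
        intro i
        rw [← Finset.prod_filter, Finset.prod_const, hfilter, Fin.card_Ioi]
      rw [Finset.prod_congr rfl fun i _ => h1 i, Finset.prod_pow_eq_pow_sum, ← hS,
        ← pow_mul, inv_pow]
    have hexp : (∏ j, Real.exp (-(2 * (n : ℝ)) * ((R⁻¹ • x) j) ^ 2)) =
        ∏ j, gw (x j) := by
      refine Finset.prod_congr rfl fun j _ => ?_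
      rw [hsm j]
      unfold gw
      congr 1
      rw [mul_pow, inv_pow, hR2]
      field_simp
      ring
    calc f (R⁻¹ • x) = (∏ i : Fin n, ∏ j : Fin n,
          if i < j then ((R⁻¹ • x) j - (R⁻¹ • x) i) ^ 2 else 1) *
          ∏ j, Real.exp (-(2 * (n : ℝ)) * ((R⁻¹ • x) j) ^ 2) := rfl
      _ = _ := by rw [hvand, hconst, hexp, mul_assoc]
  rw [funext hpt, integral_const_mul, gauss_andreief n] at key
  have habs : |R ^ n| = R ^ n := abs_of_pos (pow_pos hR n)
  rw [habs, smul_eq_mul] at key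
  have hne : (R ^ n) ≠ 0 := (pow_pos hR n).ne'
  have hfin : ∫ x, f x = (R ^ n)⁻¹ * ((R ^ (2 * S))⁻¹ *
      (Real.sqrt (2 * Real.pi) ^ n * (n.factorial : ℝ) *
        ∏ i : Fin n, ((i : ℕ).factorial : ℝ))) := by
    calc ∫ x, f x = (R ^ n)⁻¹ * (R ^ n * ∫ x, f x) := by field_simp
      _ = _ := by rw [← key]
  rw [hfin, ← mul_assoc, ← mul_inv, ← pow_add, hS, pairs_sum n]

/-- Uniform lower bound on the singular part of the potential. -/
lemma sum_tail_bound (m : ℕ) (hm : 1 ≤ m) (t : ℕ → ℝ) (ht : 0 < t (2 * m)) :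
    ∃ B : ℝ, 0 ≤ B ∧ ∀ u : ℝ, u ≠ 0 →
      -B ≤ ∑ k ∈ Finset.Icc 1 (2 * m), t k * u ^ (-(k : ℤ)) := by
  set T : ℝ := ∑ k ∈ Finset.Icc 1 (2 * m), |t k| with hT
  have hT0 : 0 ≤ T := Finset.sum_nonneg fun k _ => abs_nonneg _
  set δ : ℝ := min 1 (t (2 * m) / (T + 1)) with hδ
  have hδ0 : 0 < δ := lt_min one_pos (div_pos ht (by linarith))
  have hδ1 : δ ≤ 1 := min_le_left _ _
  refine ⟨T * (δ ^ (2 * m))⁻¹, by positivity, fun u hu => ?_⟩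
  have habs : ∀ k : ℕ, |u ^ (-(k : ℤ))| = (|u| ^ k)⁻¹ := by
    intro k
    rw [zpow_neg, zpow_natCast, abs_inv, abs_pow]
  have hu0 : 0 < |u| := abs_pos.2 hu
  rcases le_or_gt δ |u| with h | h
  · have hbd : ∀ k ∈ Finset.Icc 1 (2 * m), |t k * u ^ (-(k : ℤ))| ≤ |t k| * (δ ^ (2 * m))⁻¹ := by
      intro k hk
      rw [abs_mul, habs k]
      refine mul_le_mul_of_nonneg_left ?_ (abs_nonneg _)
      rw [inv_le_inv₀ (by positivity) (by positivity)]
      calc δ ^ (2 * m) ≤ δ ^ k := pow_le_pow_of_le_one hδ0.le hδ1 (Finset.mem_Icc.1 hk).2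
        _ ≤ |u| ^ k := pow_le_pow_left₀ hδ0.le h k
    have h1 : |∑ k ∈ Finset.Icc 1 (2 * m), t k * u ^ (-(k : ℤ))| ≤ T * (δ ^ (2 * m))⁻¹ := by
      calc |∑ k ∈ Finset.Icc 1 (2 * m), t k * u ^ (-(k : ℤ))|
          ≤ ∑ k ∈ Finset.Icc 1 (2 * m), |t k * u ^ (-(k : ℤ))| :=
            Finset.abs_sum_le_sum_abs _ _
        _ ≤ ∑ k ∈ Finset.Icc 1 (2 * m), |t k| * (δ ^ (2 * m))⁻¹ := Finset.sum_le_sum hbd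
        _ = T * (δ ^ (2 * m))⁻¹ := by rw [← Finset.sum_mul]
    linarith [neg_abs_le (∑ k ∈ Finset.Icc 1 (2 * m), t k * u ^ (-(k : ℤ)))]
  · set M : ℕ := 2 * m - 1 with hM
    have hM1 : 2 * m = M + 1 := by omega
    set v : ℝ := |u| with hv
    have hv1 : v ≤ 1 := le_trans h.le hδ1
    have hsplit : ∑ k ∈ Finset.Icc 1 (2 * m), t k * u ^ (-(k : ℤ)) =
        (∑ k ∈ Finset.Icc 1 M, t k * u ^ (-(k : ℤ))) + t (M + 1) * u ^ (-((M + 1 : ℕ) : ℤ)) := by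
      rw [hM1]
      exact Finset.sum_Icc_succ_top (by omega) _
    have hpart1 : -(T * (v ^ M)⁻¹) ≤ ∑ k ∈ Finset.Icc 1 M, t k * u ^ (-(k : ℤ)) := by
      have hbd : ∀ k ∈ Finset.Icc 1 M, |t k * u ^ (-(k : ℤ))| ≤ |t k| * (v ^ M)⁻¹ := by
        intro k hk
        rw [abs_mul, habs k]
        refine mul_le_mul_of_nonneg_left ?_ (abs_nonneg _)
        rw [inv_le_inv₀ (by positivity) (by positivity)]
        exact pow_le_pow_of_le_one hu0.le hv1 (Finset.mem_Icc.1 hk).2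
      have h2 : |∑ k ∈ Finset.Icc 1 M, t k * u ^ (-(k : ℤ))| ≤ T * (v ^ M)⁻¹ := by
        calc |∑ k ∈ Finset.Icc 1 M, t k * u ^ (-(k : ℤ))|
            ≤ ∑ k ∈ Finset.Icc 1 M, |t k * u ^ (-(k : ℤ))| := Finset.abs_sum_le_sum_abs _ _
          _ ≤ ∑ k ∈ Finset.Icc 1 M, |t k| * (v ^ M)⁻¹ := Finset.sum_le_sum hbd
          _ = (∑ k ∈ Finset.Icc 1 M, |t k|) * (v ^ M)⁻¹ := by rw [← Finset.sum_mul]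
          _ ≤ T * (v ^ M)⁻¹ := by
              refine mul_le_mul_of_nonneg_right ?_ (by positivity)
              refine Finset.sum_le_sum_of_subset_of_nonneg ?_ (fun k _ _ => abs_nonneg _)
              exact Finset.Icc_subset_Icc_right (by omega)
      linarith [neg_abs_le (∑ k ∈ Finset.Icc 1 M, t k * u ^ (-(k : ℤ)))]
    have hpart2 : t (M + 1) * u ^ (-((M + 1 : ℕ) : ℤ)) = t (2 * m) * (v ^ (M + 1))⁻¹ := by
      rw [← hM1, zpow_neg, zpow_natCast]
      congr 2
      rw [hM1, hv, ← hM1]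
      exact ((even_two_mul m).pow_abs u).symm
    have hkey : (T + 1) * (v ^ M)⁻¹ ≤ t (2 * m) * (v ^ (M + 1))⁻¹ := by
      have hvδ : v * (T + 1) ≤ t (2 * m) := by
        have : δ ≤ t (2 * m) / (T + 1) := min_le_right _ _
        have h3 : v ≤ t (2 * m) / (T + 1) := le_trans h.le this
        rw [div_eq_mul_inv] at h3
        calc v * (T + 1) ≤ (t (2 * m) * (T + 1)⁻¹) * (T + 1) :=
              mul_le_mul_of_nonneg_right h3 (by linarith)
          _ = t (2 * m) := by field_simp
      have : t (2 * m) * (v ^ (M + 1))⁻¹ = (t (2 * m) / v) * (v ^ M)⁻¹ := by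
        rw [pow_succ, mul_inv, div_eq_mul_inv]
        ring
      rw [this]
      refine mul_le_mul_of_nonneg_right ?_ (by positivity)
      rw [le_div_iff₀ hu0]
      linarith [hvδ]
    have hB : (0 : ℝ) ≤ T * (δ ^ (2 * m))⁻¹ := by positivity
    have hpos : (0 : ℝ) ≤ (v ^ M)⁻¹ := by positivity
    rw [hsplit, hpart2]
    nlinarith [hpart1, hkey]


lemma wfun_nonneg (m n : ℕ) (lam : ℝ) (t : ℕ → ℝ) (x : ℝ) : 0 ≤ wfun m n lam t x := by
  unfold wfun
  split
  · exact le_refl 0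
  · exact (Real.exp_pos _).le

lemma wfun_le {m : ℕ} {t : ℕ → ℝ} {B : ℝ} (hB0 : 0 ≤ B)
    (hB : ∀ u : ℝ, u ≠ 0 → -B ≤ ∑ k ∈ Finset.Icc 1 (2 * m), t k * u ^ (-(k : ℤ)))
    (n : ℕ) (lam x : ℝ) :
    wfun m n lam t x ≤ Real.exp ((n : ℝ) * B) * Real.exp (-(2 * (n : ℝ)) * x ^ 2) := by
  unfold wfun
  split
  · positivity
  · rename_i hx
    rw [← Real.exp_add]
    refine Real.exp_le_exp.2 ?_
    have hs := hB (x - lam) (sub_ne_zero.2 hx)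
    unfold Vpot
    have hn0 : (0 : ℝ) ≤ (n : ℝ) := Nat.cast_nonneg n
    nlinarith [mul_le_mul_of_nonneg_left (neg_le_neg hs) hn0]

lemma measurable_wfun (m n : ℕ) (lam : ℝ) (t : ℕ → ℝ) :
    Measurable (wfun m n lam t) := by
  unfold wfun
  refine Measurable.ite ?_ measurable_const ?_
  · have : {a : ℝ | a = lam} = {lam} := by ext a; simp
    rw [this]; exact measurableSet_singleton lam
  · refine Measurable.exp (Measurable.const_mul ?_ _)
    unfold Vpot
    refine Measurable.add (by measurability) ?_
    refine Finset.measurable_sum _ fun k _ => ?_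
    have : (fun x : ℝ => t k * (x - lam) ^ (-(k : ℤ))) =
        fun x : ℝ => t k * ((x - lam) ^ k)⁻¹ := by
      funext x; rw [zpow_neg, zpow_natCast]
    rw [this]
    exact (((measurable_id.sub_const lam).pow_const k).inv).const_mul _

lemma tendsto_wfun (m n : ℕ) (hm : 1 ≤ m) (t : ℕ → ℝ) (y : ℝ) :
    Tendsto (fun lam : ℝ => wfun m n lam t y) atTop
      (nhds (Real.exp (-(2 * (n : ℝ)) * y ^ 2))) := by
  have hterm : ∀ k ∈ Finset.Icc 1 (2 * m),
      Tendsto (fun lam : ℝ => t k * (y - lam) ^ (-(k : ℤ))) atTop (nhds 0) := by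
    intro k hk
    have hk1 : 1 ≤ k := (Finset.mem_Icc.1 hk).1
    have h1 : Tendsto (fun lam : ℝ => lam - y) atTop atTop := by
      simpa [sub_eq_add_neg] using tendsto_atTop_add_const_right atTop (-y) tendsto_id
    have h2 : Tendsto (fun lam : ℝ => (lam - y) ^ k) atTop atTop :=
      (tendsto_pow_atTop (by omega)).comp h1
    have h3 : Tendsto (fun lam : ℝ => ((lam - y) ^ k)⁻¹) atTop (nhds 0) :=
      h2.inv_tendsto_atTop
    have e : (fun lam : ℝ => t k * (y - lam) ^ (-(k : ℤ))) =
        fun lam : ℝ => (t k * (-1 : ℝ) ^ k) * ((lam - y) ^ k)⁻¹ := by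
      funext lam
      rw [zpow_neg, zpow_natCast]
      have : (y - lam) = -(lam - y) := by ring
      rw [this, neg_pow, mul_inv, ← mul_assoc]
      have h5 : ((-1 : ℝ) ^ k)⁻¹ = (-1 : ℝ) ^ k := by
        rcases Nat.even_or_odd k with h | h
        · rw [h.neg_one_pow]; norm_num
        · rw [h.neg_one_pow]; norm_num
      rw [h5]
    rw [e]
    simpa using h3.const_mul (t k * (-1 : ℝ) ^ k)
  have hsum : Tendsto (fun lam : ℝ =>
      ∑ k ∈ Finset.Icc 1 (2 * m), t k * (y - lam) ^ (-(k : ℤ))) atTop (nhds 0) := by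
    have := tendsto_finset_sum (Finset.Icc 1 (2 * m)) hterm
    simpa using this
  have hV : Tendsto (fun lam : ℝ => Vpot m lam t y) atTop (nhds (2 * y ^ 2)) := by
    have := hsum.const_add (2 * y ^ 2)
    simpa [Vpot] using this
  have hexp : Tendsto (fun lam : ℝ => Real.exp (-(n : ℝ) * Vpot m lam t y)) atTop
      (nhds (Real.exp (-(2 * (n : ℝ)) * y ^ 2))) := by
    have h4 := (Real.continuous_exp.tendsto _).comp (hV.const_mul (-(n : ℝ)))
    have h5 : -(n : ℝ) * (2 * y ^ 2) = -(2 * (n : ℝ)) * y ^ 2 := by ring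
    rw [h5] at h4
    exact h4
  refine hexp.congr' ?_
  filter_upwards [eventually_gt_atTop y] with lam hlam
  rw [wfun, if_neg (by exact fun h => absurd h (ne_of_lt hlam))]




lemma vand_bound (n : ℕ) (x : Fin n → ℝ) :
    (∏ i : Fin n, ∏ j : Fin n, if i < j then (x j - x i) ^ 2 else 1) ≤
      ∏ j : Fin n, (1 + 2 * (x j) ^ 2) ^ (2 * n) := by
  set P : ℝ := ∏ j : Fin n, (1 + 2 * (x j) ^ 2) with hP
  have hfac : ∀ j : Fin n, (0:ℝ) ≤ 1 + 2 * (x j) ^ 2 := fun j => by positivity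
  have step : (∏ i : Fin n, ∏ j : Fin n, if i < j then (x j - x i) ^ 2 else 1) ≤
      ∏ i : Fin n, ∏ j : Fin n, (1 + 2 * (x i) ^ 2) * (1 + 2 * (x j) ^ 2) := by
    refine Finset.prod_le_prod (fun i _ => Finset.prod_nonneg fun j _ => ?_)
      (fun i _ => Finset.prod_le_prod (fun j _ => ?_) (fun j _ => ?_))
    · split <;> positivity
    · split <;> positivity
    · by_cases h : i < j
      · rw [if_pos h]; nlinarith [sq_nonneg (x j + x i)]
      · rw [if_neg h]; nlinarith [sq_nonneg (x i), sq_nonneg (x j), sq_nonneg (x i * x j)]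
  have e1 : (∏ i : Fin n, ∏ j : Fin n, (1 + 2 * (x i) ^ 2) * (1 + 2 * (x j) ^ 2)) =
      P ^ (2 * n) := by
    have inner : ∀ i : Fin n, (∏ j : Fin n, (1 + 2 * (x i) ^ 2) * (1 + 2 * (x j) ^ 2)) =
        (1 + 2 * (x i) ^ 2) ^ n * P := by
      intro i
      rw [Finset.prod_mul_distrib, Finset.prod_const, Finset.card_univ, Fintype.card_fin]
    rw [Finset.prod_congr rfl fun i _ => inner i, Finset.prod_mul_distrib,
      Finset.prod_pow, ← hP, Finset.prod_const, Finset.card_univ, Fintype.card_fin,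
      ← pow_add, two_mul]
  calc (∏ i : Fin n, ∏ j : Fin n, if i < j then (x j - x i) ^ 2 else 1)
      ≤ ∏ i : Fin n, ∏ j : Fin n, (1 + 2 * (x i) ^ 2) * (1 + 2 * (x j) ^ 2) := step
    _ = P ^ (2 * n) := e1
    _ = ∏ j : Fin n, (1 + 2 * (x j) ^ 2) ^ (2 * n) := (Finset.prod_pow _ _ _).symm

lemma fact_prod_nat (n : ℕ) :
    (∏ j ∈ Finset.Icc 1 n, j.factorial) = n.factorial * ∏ i ∈ Finset.range n, i.factorial := by
  induction n with
  | zero => simp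
  | succ k ih =>
    rw [Finset.prod_Icc_succ_top (by omega), ih, Finset.prod_range_succ]
    ring

lemma zgue_const (n : ℕ) (hn : 1 ≤ n) :
    (Real.sqrt (4 * (n : ℝ)) ^ (n ^ 2))⁻¹ *
        (Real.sqrt (2 * Real.pi) ^ n * (n.factorial : ℝ) *
          ∏ i : Fin n, ((i : ℕ).factorial : ℝ)) =
      (2 * Real.pi) ^ ((n : ℝ) / 2) * (4 * (n : ℝ)) ^ (-((n : ℝ) ^ 2) / 2) *
        ∏ j ∈ Finset.Icc 1 n, (Nat.factorial j : ℝ) := by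
  have h2pi : (0:ℝ) ≤ 2 * Real.pi := by positivity
  have h4n : (0:ℝ) ≤ 4 * (n : ℝ) := by positivity
  have e1 : Real.sqrt (2 * Real.pi) ^ n = (2 * Real.pi) ^ ((n : ℝ) / 2) := by
    rw [Real.sqrt_eq_rpow, ← Real.rpow_natCast ((2 * Real.pi) ^ (1 / (2:ℝ))) n,
      ← Real.rpow_mul h2pi]
    congr 1
    ring
  have e2 : (Real.sqrt (4 * (n : ℝ)) ^ (n ^ 2))⁻¹ =
      (4 * (n : ℝ)) ^ (-((n : ℝ) ^ 2) / 2) := by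
    rw [Real.sqrt_eq_rpow, ← Real.rpow_natCast ((4 * (n:ℝ)) ^ (1 / (2:ℝ))) (n ^ 2),
      ← Real.rpow_mul h4n, ← Real.rpow_neg h4n]
    congr 1
    push_cast
    ring
  have e3 : (n.factorial : ℝ) * (∏ i : Fin n, ((i : ℕ).factorial : ℝ)) =
      ∏ j ∈ Finset.Icc 1 n, (Nat.factorial j : ℝ) := by
    have := fact_prod_nat n
    have hcast : ((∏ j ∈ Finset.Icc 1 n, j.factorial : ℕ) : ℝ) =
        ((n.factorial * ∏ i ∈ Finset.range n, i.factorial : ℕ) : ℝ) := by rw [this]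
    push_cast at hcast
    rw [hcast, Fin.prod_univ_eq_prod_range (fun i => ((i).factorial : ℝ)) n]
  rw [← e1, ← e2, ← e3]
  ring

/-- For fixed `m, n ≥ 1` and `t ∈ ℝ^{2m−1}×(0,∞)`, the partition
function satisfies `Z_n(λ;t) → Z_n^{GUE}` as `λ → +∞`. -/
theorem stmt18 (m n : ℕ) (hm : 1 ≤ m) (hn : 1 ≤ n) (t : ℕ → ℝ) (ht : 0 < t (2 * m)) :
    Tendsto (fun lam : ℝ => Zn m n lam t) atTop (nhds (ZGUE n)) := by
  classical
  obtain ⟨B, hB0, hB⟩ := sum_tail_bound m hm t ht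
  have hn2 : (0 : ℝ) < 2 * (n : ℝ) := by
    have : (0:ℝ) < (n:ℝ) := by exact_mod_cast hn
    linarith
  set h1 : ℝ → ℝ := fun y =>
    Real.exp ((n : ℝ) * B) * ((1 + 2 * y ^ 2) ^ (2 * n) * Real.exp (-(2 * (n : ℝ)) * y ^ 2))
    with hh1
  have hh1int : Integrable h1 := by
    have hp := integrable_poly_gauss ((1 + 2 * X ^ 2) ^ (2 * n)) hn2
    have e : (fun y : ℝ => (((1 + 2 * X ^ 2 : ℝ[X]) ^ (2 * n)).eval y) *
        Real.exp (-(2 * (n : ℝ)) * y ^ 2)) =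
        fun y : ℝ => (1 + 2 * y ^ 2) ^ (2 * n) * Real.exp (-(2 * (n : ℝ)) * y ^ 2) := by
      funext y; simp [eval_pow]
    rw [e] at hp
    exact hp.const_mul _
  set bound : (Fin n → ℝ) → ℝ := fun x => ∏ j : Fin n, h1 (x j) with hbnd
  have hboundint : Integrable bound := Integrable.fintype_prod (fun _ => hh1int)
  set G : (Fin n → ℝ) → ℝ := fun x =>
    (∏ i : Fin n, ∏ j : Fin n, if i < j then (x j - x i) ^ 2 else 1) *
      ∏ j : Fin n, Real.exp (-(2 * (n : ℝ)) * (x j) ^ 2) with hG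
  have hΔmeas : Measurable fun x : Fin n → ℝ =>
      ∏ i : Fin n, ∏ j : Fin n, if i < j then (x j - x i) ^ 2 else 1 := by
    refine Finset.measurable_prod _ fun i _ => Finset.measurable_prod _ fun j _ => ?_
    by_cases hij : i < j
    · simp only [if_pos hij]
      exact ((measurable_pi_apply j).sub (measurable_pi_apply i)).pow_const 2
    · simp only [if_neg hij]
      exact measurable_const
  have hmeas : ∀ lam : ℝ, AEStronglyMeasurable (fun x : Fin n → ℝ =>
      (∏ i : Fin n, ∏ j : Fin n, if i < j then (x j - x i) ^ 2 else 1) *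
        ∏ j : Fin n, wfun m n lam t (x j)) (volume : Measure (Fin n → ℝ)) := by
    intro lam
    refine (hΔmeas.mul ?_).aestronglyMeasurable
    exact Finset.measurable_prod _ fun j _ =>
      (measurable_wfun m n lam t).comp (measurable_pi_apply j)
  have hΔnonneg : ∀ x : Fin n → ℝ,
      (0:ℝ) ≤ ∏ i : Fin n, ∏ j : Fin n, if i < j then (x j - x i) ^ 2 else 1 := by
    intro x
    refine Finset.prod_nonneg fun i _ => Finset.prod_nonneg fun j _ => ?_
    split <;> positivity
  have hdom : ∀ lam : ℝ, ∀ᵐ x : Fin n → ℝ, ‖(∏ i : Fin n, ∏ j : Fin n,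
      if i < j then (x j - x i) ^ 2 else 1) * ∏ j : Fin n, wfun m n lam t (x j)‖ ≤ bound x := by
    intro lam
    refine Eventually.of_forall fun x => ?_
    have hwn : (0:ℝ) ≤ ∏ j : Fin n, wfun m n lam t (x j) :=
      Finset.prod_nonneg fun j _ => wfun_nonneg m n lam t (x j)
    rw [Real.norm_eq_abs, abs_of_nonneg (mul_nonneg (hΔnonneg x) hwn)]
    calc (∏ i : Fin n, ∏ j : Fin n, if i < j then (x j - x i) ^ 2 else 1) *
          ∏ j : Fin n, wfun m n lam t (x j)
        ≤ (∏ j : Fin n, (1 + 2 * (x j) ^ 2) ^ (2 * n)) *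
          ∏ j : Fin n, (Real.exp ((n : ℝ) * B) * Real.exp (-(2 * (n : ℝ)) * (x j) ^ 2)) := by
          refine mul_le_mul (vand_bound n x) ?_ hwn
            (Finset.prod_nonneg fun j _ => by positivity)
          exact Finset.prod_le_prod (fun j _ => wfun_nonneg m n lam t (x j))
            (fun j _ => wfun_le hB0 hB n lam (x j))
      _ = bound x := by
          rw [hbnd, ← Finset.prod_mul_distrib]
          exact Finset.prod_congr rfl fun j _ => by rw [hh1]; ring
  have hlim : ∀ᵐ x : Fin n → ℝ, Tendsto (fun lam : ℝ =>
      (∏ i : Fin n, ∏ j : Fin n, if i < j then (x j - x i) ^ 2 else 1) *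
        ∏ j : Fin n, wfun m n lam t (x j)) atTop (nhds (G x)) := by
    refine Eventually.of_forall fun x => ?_
    rw [hG]
    exact Tendsto.const_mul _
      (tendsto_finset_prod _ fun j _ => tendsto_wfun m n hm t (x j))
  have hmain := tendsto_integral_filter_of_dominated_convergence
    (μ := (volume : Measure (Fin n → ℝ))) (l := (atTop : Filter ℝ)) bound
    (Eventually.of_forall hmeas) (Eventually.of_forall hdom) hboundint hlim
  have hGval : ∫ x : Fin n → ℝ, G x = ZGUE n := by
    rw [hG]
    rw [gauss_scaled n hn, zgue_const n hn]
    rfl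
  rw [hGval] at hmain
  exact hmain

end
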